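/- The sets W(r,t,i) form a basis for a topology on D = Λ × {1,−1}: if (t,k) ∈ W(r₁,u₁,i₁) ∩ W(r₂,u₂,i₂) for two such basic sets, then there exists r ∈ Λ ∪ {0} with r ≺ t such that W(r,t,k) ⊆ W(r₁,u₁,i₁) ∩ W(r₂,u₂,i₂). -/

import Mathlib

/-- An element of Kurepa's tree `Λ`: an injective function `t : α → ω` with countable
ordinal domain `α` and coinfinite range.  The function is represented as a total function
on ordinals which takes the junk value `0` outside of the domain. -/
structure Lambda : Type 1 where
  toFun : Ordinal.{0} → ℕ
  dom : Ordinal.{0}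
  countable : dom.card ≤ Cardinal.aleph0
  inj : ∀ β γ, β < dom → γ < dom → toFun β = toFun γ → β = γ
  coinfinite : {n : ℕ | ∀ β, β < dom → toFun β ≠ n}.Infinite
  junk : ∀ β, ¬ β < dom → toFun β = 0

/-- The tree order on `Λ`: `s ≼ t` iff `t` extends `s`. -/
def Lambda.le (s t : Lambda) : Prop :=
  s.dom ≤ t.dom ∧ ∀ β, β < s.dom → s.toFun β = t.toFun β

/-- The strict tree order on `Λ`. -/
def Lambda.lt (s t : Lambda) : Prop := Lambda.le s t ∧ s ≠ t

/-- `r ≺ s` for `r ∈ Λ ∪ {0}` (`none` plays the role of the extra least element `0`). -/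
def precLt : Option Lambda → Lambda → Prop
  | none, _ => True
  | some r, s => Lambda.lt r s

/-- The interval `(r, t] = {s ∈ Λ : r ≺ s ≼ t}`, with `r ∈ Λ ∪ {0}`. -/
def lamIoc (r : Option Lambda) (t : Lambda) : Set Lambda :=
  {s | precLt r s ∧ Lambda.le s t}

/-- The position of the minimum of `t` on the ordinal interval `[δ, β)`. -/
noncomputable def minPos (t : Ordinal.{0} → ℕ) (δ β : Ordinal.{0}) : Ordinal.{0} :=
  sInf {ξ | δ ≤ ξ ∧ ξ < β ∧ ∀ η, δ ≤ η → η < β → t ξ ≤ t η}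

lemma minPos_lt (t : Ordinal.{0} → ℕ) {δ β : Ordinal.{0}} (h : δ < β) : minPos t δ β < β := by
  have hne : {ξ : Ordinal.{0} | δ ≤ ξ ∧ ξ < β ∧ ∀ η, δ ≤ η → η < β → t ξ ≤ t η}.Nonempty := by
    have h1 : {n : ℕ | ∃ ξ : Ordinal.{0}, δ ≤ ξ ∧ ξ < β ∧ t ξ = n}.Nonempty :=
      ⟨t δ, δ, le_refl _, h, rfl⟩
    obtain ⟨ξ, hξ1, hξ2, hξ3⟩ := Nat.sInf_mem h1
    refine ⟨ξ, hξ1, hξ2, fun η h1' h2' => ?_⟩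
    rw [hξ3]
    exact Nat.sInf_le ⟨η, h1', h2', rfl⟩
  obtain ⟨ξ, hξ⟩ := hne
  calc minPos t δ β ≤ ξ := csInf_le (OrderBot.bddBelow _) hξ
    _ < β := hξ.2.1

/-- The sequence `τ` computed from the starting ordinal `β₀` downwards: `τ` is obtained by
repeatedly passing from `β` to the position of the minimum of `t` on `[δ, β)`, stopping upon
reaching `δ`.  The resulting finite sequence `(β_k, …, β_1)` is recorded as a list in the
order `[β_k, …, β_1]` (so concatenation of the lists corresponds to `⌢`). -/
noncomputable def tauFrom (δ : Ordinal.{0}) (t : Ordinal.{0} → ℕ) : Ordinal.{0} → List Ordinal.{0} :=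
  WellFounded.fix wellFounded_lt
    (fun β IH => if h : δ < β then IH (minPos t δ β) (minPos_lt t h) ++ [minPos t δ β] else [])

/-- The finite sequence `τ(s,t)` of ordinals, for `s ≼ t` in `Λ`. -/
noncomputable def tau (s t : Lambda) : List Ordinal.{0} :=
  tauFrom s.dom t.toFun t.dom

/-- `ℓ(s,t)`, the length of `τ(s,t)`. -/
noncomputable def ell (s t : Lambda) : ℕ := (tau s t).length

/-- The underlying set of the `Λ`-duplicate: `D = Λ × {1, -1}`. -/
abbrev Dup : Type 1 := Lambda × ℤˣ

/-- The basic open sets `W(r,t,i)` of the `Λ`-duplicate. -/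
noncomputable def Wset (r : Option Lambda) (t : Lambda) (i : ℤˣ) : Set Dup :=
  {q | q.1 ∈ lamIoc r t ∧ q.2 = (-1) ^ ell q.1 t * i}

/-- The collection of all basic open sets `W(r,t,i)` with `r ≺ t`. -/
noncomputable def WBasis : Set (Set Dup) :=
  {S | ∃ (r : Option Lambda) (t : Lambda) (i : ℤˣ), precLt r t ∧ S = Wset r t i}

/-- The topology of the `Λ`-duplicate, generated by the basic sets `W(r,t,i)`. -/
noncomputable instance : TopologicalSpace Dup := TopologicalSpace.generateFrom WBasis


section Aux

lemma minPosSet_nonempty (f : Ordinal.{0} → ℕ) {δ β : Ordinal.{0}} (h : δ < β) :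
    {ξ | δ ≤ ξ ∧ ξ < β ∧ ∀ η, δ ≤ η → η < β → f ξ ≤ f η}.Nonempty := by
  have h1 : {n : ℕ | ∃ ξ : Ordinal.{0}, δ ≤ ξ ∧ ξ < β ∧ f ξ = n}.Nonempty :=
    ⟨f δ, δ, le_refl _, h, rfl⟩
  obtain ⟨ξ, hξ1, hξ2, hξ3⟩ := Nat.sInf_mem h1
  refine ⟨ξ, hξ1, hξ2, fun η h1' h2' => ?_⟩
  rw [hξ3]
  exact Nat.sInf_le ⟨η, h1', h2', rfl⟩

lemma minPos_mem (f : Ordinal.{0} → ℕ) {δ β : Ordinal.{0}} (h : δ < β) :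
    δ ≤ minPos f δ β ∧ minPos f δ β < β ∧ ∀ η, δ ≤ η → η < β → f (minPos f δ β) ≤ f η :=
  csInf_mem (minPosSet_nonempty f h)

lemma tauFrom_eq (δ : Ordinal.{0}) (f : Ordinal.{0} → ℕ) (β : Ordinal.{0}) :
    tauFrom δ f β =
      if h : δ < β then tauFrom δ f (minPos f δ β) ++ [minPos f δ β] else [] := by
  rw [tauFrom, WellFounded.fix_eq]

lemma tauFrom_congr {δ : Ordinal.{0}} {f g : Ordinal.{0} → ℕ} :
    ∀ β, (∀ ξ, δ ≤ ξ → ξ < β → f ξ = g ξ) → tauFrom δ f β = tauFrom δ g β := by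
  intro β
  induction β using Ordinal.induction with
  | h β IH =>
    intro hfg
    rw [tauFrom_eq δ f β, tauFrom_eq δ g β]
    by_cases h : δ < β
    · rw [dif_pos h, dif_pos h]
      have hset : {ξ | δ ≤ ξ ∧ ξ < β ∧ ∀ η, δ ≤ η → η < β → f ξ ≤ f η}
          = {ξ | δ ≤ ξ ∧ ξ < β ∧ ∀ η, δ ≤ η → η < β → g ξ ≤ g η} := by
        ext ξ
        constructor
        · rintro ⟨a, b, c⟩
          exact ⟨a, b, fun η h1 h2 => by rw [← hfg ξ a b, ← hfg η h1 h2]; exact c η h1 h2⟩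
        · rintro ⟨a, b, c⟩
          exact ⟨a, b, fun η h1 h2 => by rw [hfg ξ a b, hfg η h1 h2]; exact c η h1 h2⟩
      have hm : minPos f δ β = minPos g δ β := by rw [minPos, minPos, hset]
      rw [hm, IH _ (minPos_lt g h) (fun ξ h1 h2 => hfg ξ h1 (h2.trans (minPos_lt g h)))]
    · rw [dif_neg h, dif_neg h]

lemma tauFrom_mem {δ : Ordinal.{0}} {f : Ordinal.{0} → ℕ} :
    ∀ β, ∀ m ∈ tauFrom δ f β, δ ≤ m ∧ m < β ∧ f m ≤ f δ := by
  intro β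
  induction β using Ordinal.induction with
  | h β IH =>
    intro m hm
    rw [tauFrom_eq] at hm
    by_cases h : δ < β
    · rw [dif_pos h] at hm
      rcases List.mem_append.1 hm with hm | hm
      · obtain ⟨a, b, c⟩ := IH _ (minPos_lt f h) m hm
        exact ⟨a, b.trans (minPos_lt f h), c⟩
      · rw [List.mem_singleton.1 hm]
        obtain ⟨a, b, c⟩ := minPos_mem f h
        exact ⟨a, b, c δ le_rfl h⟩
    · rw [dif_neg h] at hm; exact absurd hm List.not_mem_nil

lemma tauFrom_split {f : Ordinal.{0} → ℕ} {δ δ' : Ordinal.{0}} (h1 : δ ≤ δ') :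
    ∀ β, δ' ≤ β →
    (∀ ξ η, δ ≤ ξ → ξ < β → δ ≤ η → η < β → f ξ = f η → ξ = η) →
    (∀ m ∈ tauFrom δ' f β, ∀ ξ, δ ≤ ξ → ξ < δ' → f m < f ξ) →
    tauFrom δ f β = tauFrom δ f δ' ++ tauFrom δ' f β := by
  intro β
  induction β using Ordinal.induction with
  | h β IH =>
    intro h2 hinj H
    by_cases h : δ' < β
    · set m := minPos f δ' β with hm
      obtain ⟨hm1, hm2, hm3⟩ := minPos_mem f h
      have hmem : m ∈ tauFrom δ' f β := by
        rw [tauFrom_eq, dif_pos h]; exact List.mem_append_right _ (List.mem_singleton_self _)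
      have hminS : m ∈ {ξ | δ ≤ ξ ∧ ξ < β ∧ ∀ η, δ ≤ η → η < β → f m ≤ f η} := by
        refine ⟨h1.trans hm1, hm2, fun η hη1 hη2 => ?_⟩
        by_cases hη : η < δ'
        · exact (H m hmem η hη1 hη).le
        · exact hm3 η (le_of_not_gt hη) hη2
      have hδβ : δ < β := lt_of_le_of_lt h1 h
      have hmp := minPos_mem f hδβ
      have heq : minPos f δ β = m := by
        apply hinj _ _ hmp.1 hmp.2.1 hminS.1 hminS.2.1
        exact le_antisymm (hmp.2.2 m hminS.1 hminS.2.1) (hminS.2.2 _ hmp.1 hmp.2.1)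
      have hIH : tauFrom δ f m = tauFrom δ f δ' ++ tauFrom δ' f m := by
        refine IH m hm2 hm1
          (fun ξ η a b c d => hinj ξ η a (b.trans hm2) c (d.trans hm2)) ?_
        intro m' hm' ξ a b
        refine H m' ?_ ξ a b
        rw [tauFrom_eq, dif_pos h]
        exact List.mem_append_left _ hm'
      rw [tauFrom_eq δ f β, dif_pos hδβ, heq, hIH,
        tauFrom_eq δ' f β, dif_pos h, List.append_assoc]
    · have hβ : β = δ' := le_antisymm (le_of_not_gt h) h2
      have h0 : tauFrom δ' f β = [] := by rw [tauFrom_eq, dif_neg h]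
      rw [h0, List.append_nil, hβ]

lemma Lambda.ext' {s t : Lambda} (h1 : s.toFun = t.toFun) (h2 : s.dom = t.dom) : s = t := by
  cases s; cases t; simp_all

lemma Lambda.eq_of_le_of_dom_eq {s t : Lambda} (h : Lambda.le s t) (hd : s.dom = t.dom) :
    s = t := by
  refine Lambda.ext' (funext fun β => ?_) hd
  by_cases hβ : β < s.dom
  · exact h.2 β hβ
  · rw [s.junk β hβ, t.junk β (hd ▸ hβ)]

lemma Lambda.lt_dom {r t : Lambda} (h : Lambda.lt r t) : r.dom < t.dom :=
  lt_of_le_of_ne h.1.1 (fun hd => h.2 (Lambda.eq_of_le_of_dom_eq h.1 hd))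

lemma Lambda.le_refl' (t : Lambda) : Lambda.le t t := ⟨le_rfl, fun _ _ => rfl⟩

lemma Lambda.le_trans' {s t u : Lambda} (h1 : Lambda.le s t) (h2 : Lambda.le t u) :
    Lambda.le s u :=
  ⟨h1.1.trans h2.1, fun β hβ => (h1.2 β hβ).trans (h2.2 β (lt_of_lt_of_le hβ h1.1))⟩

lemma ell_self (t : Lambda) : ell t t = 0 := by
  rw [ell, tau, tauFrom_eq, dif_neg (lt_irrefl _)]
  rfl

lemma tau_split {s t u : Lambda} (hst : Lambda.le s t) (htu : Lambda.le t u)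
    (H : ∀ m ∈ tau t u, ∀ ξ, s.dom ≤ ξ → ξ < t.dom → u.toFun m < u.toFun ξ) :
    tau s u = tau s t ++ tau t u := by
  have h1 : tauFrom s.dom u.toFun u.dom
      = tauFrom s.dom u.toFun t.dom ++ tauFrom t.dom u.toFun u.dom :=
    tauFrom_split hst.1 u.dom htu.1 (fun ξ η _ b _ d e => u.inj ξ η b d e) H
  have h2 : tauFrom s.dom u.toFun t.dom = tauFrom s.dom t.toFun t.dom :=
    tauFrom_congr t.dom (fun ξ _ hξ => (htu.2 ξ hξ).symm)
  rw [tau, h1, h2]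
  rfl

/-- The restriction of `t ∈ Λ` to an initial segment `γ ≤ dom t`. -/
noncomputable def Lambda.restrict (t : Lambda) (γ : Ordinal.{0}) (hγ : γ ≤ t.dom) : Lambda where
  toFun ξ := if ξ < γ then t.toFun ξ else 0
  dom := γ
  countable := le_trans (Ordinal.card_le_card hγ) t.countable
  inj β ξ hβ hξ h := t.inj β ξ (lt_of_lt_of_le hβ hγ) (lt_of_lt_of_le hξ hγ)
    (by simpa only [if_pos hβ, if_pos hξ] using h)
  coinfinite := t.coinfinite.mono
    (fun n hn β hβ => by simpa only [if_pos hβ] using hn β (lt_of_lt_of_le hβ hγ))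
  junk β h := if_neg h

lemma key_lemma (t : Lambda) (k : ℤˣ) (r₁ : Option Lambda) (u₁ : Lambda) (i₁ : ℤˣ)
    (r₂ : Option Lambda) (u₂ : Lambda) (i₂ : ℤˣ)
    (hmem : (t, k) ∈ Wset r₁ u₁ i₁ ∩ Wset r₂ u₂ i₂) :
    ∃ r : Option Lambda, precLt r t ∧ Wset r t k ⊆ Wset r₁ u₁ i₁ ∩ Wset r₂ u₂ i₂ := by
  classical
  obtain ⟨⟨⟨hp1t, htu1⟩, hk1⟩, ⟨⟨hp2t, htu2⟩, hk2⟩⟩ := hmem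
  replace hp1t : precLt r₁ t := hp1t
  replace htu1 : Lambda.le t u₁ := htu1
  replace hk1 : k = (-1) ^ ell t u₁ * i₁ := hk1
  replace hp2t : precLt r₂ t := hp2t
  replace htu2 : Lambda.le t u₂ := htu2
  replace hk2 : k = (-1) ^ ell t u₂ * i₂ := hk2
  by_cases h0 : t.dom = 0
  · refine ⟨none, trivial, ?_⟩
    rintro ⟨s, j⟩ ⟨⟨-, hst⟩, hj⟩
    replace hst : Lambda.le s t := hst
    replace hj : j = (-1) ^ ell s t * k := hj
    have hsd : s.dom = t.dom := by
      rw [h0]; exact le_antisymm (h0 ▸ hst.1) zero_le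
    have hs : s = t := Lambda.eq_of_le_of_dom_eq hst hsd
    subst hs
    rw [ell_self, pow_zero, one_mul] at hj
    subst hj
    exact ⟨⟨⟨hp1t, htu1⟩, hk1⟩, ⟨⟨hp2t, htu2⟩, hk2⟩⟩
  · have ht0 : 0 < t.dom := pos_iff_ne_zero.2 h0
    set d : Option Lambda → Ordinal.{0} := fun o => o.elim 0 Lambda.dom with hd_def
    have hd : ∀ o, precLt o t → d o < t.dom := by
      rintro (_ | r') h
      · exact ht0
      · exact Lambda.lt_dom h
    set N : ℕ := max (if t.dom < u₁.dom then u₁.toFun t.dom else 0)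
        (if t.dom < u₂.dom then u₂.toFun t.dom else 0) with hN_def
    set A : Set Ordinal.{0} := {ξ | ξ < t.dom ∧ t.toFun ξ ≤ N} with hA_def
    have hAfin : A.Finite := by
      refine Set.Finite.of_finite_image (f := t.toFun) ((Set.finite_Iic N).subset ?_) ?_
      · rintro n ⟨ξ, hξ, rfl⟩; exact hξ.2
      · exact fun ξ hξ η hη h => t.inj ξ η hξ.1 hη.1 h
    set C : Finset Ordinal.{0} := insert (d r₁) (insert (d r₂) hAfin.toFinset) with hC_def
    have hCne : C.Nonempty := ⟨d r₁, by simp [hC_def]⟩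
    set γ : Ordinal.{0} := C.max' hCne with hγ_def
    have hγt : γ < t.dom := by
      rw [hγ_def, Finset.max'_lt_iff]
      intro ξ hξ
      rw [hC_def, Finset.mem_insert, Finset.mem_insert, Set.Finite.mem_toFinset] at hξ
      rcases hξ with rfl | rfl | hξ
      · exact hd r₁ hp1t
      · exact hd r₂ hp2t
      · exact hξ.1
    have hγ1 : d r₁ ≤ γ := Finset.le_max' _ _ (by simp [hC_def])
    have hγ2 : d r₂ ≤ γ := Finset.le_max' _ _ (by simp [hC_def])
    have hγA : ∀ ξ ∈ A, ξ ≤ γ := fun ξ hξ =>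
      Finset.le_max' _ _ (by simp [hC_def, Set.Finite.mem_toFinset, hξ])
    set rr : Lambda := t.restrict γ hγt.le with hrr_def
    have hrrt : Lambda.lt rr t := by
      refine ⟨⟨hγt.le, fun β hβ => if_pos hβ⟩, fun he => ?_⟩
      exact absurd (congrArg Lambda.dom he) (ne_of_lt hγt)
    refine ⟨some rr, hrrt, ?_⟩
    rintro ⟨s, j⟩ ⟨⟨hrs, hst⟩, hj⟩
    replace hrs : Lambda.lt rr s := hrs
    replace hst : Lambda.le s t := hst
    replace hj : j = (-1) ^ ell s t * k := hj
    have hγs : γ < s.dom := Lambda.lt_dom hrs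
    -- splitting of tau
    have main : ∀ u : Lambda, Lambda.le t u → (t.dom < u.dom → u.toFun t.dom ≤ N) →
        tau s u = tau s t ++ tau t u := by
      intro u htu hNb
      refine tau_split hst htu ?_
      intro m hm ξ ha hb
      obtain ⟨hm1, hm2, hm3⟩ := tauFrom_mem u.dom m hm
      have hum : u.toFun m ≤ N := hm3.trans (hNb (lt_of_le_of_lt hm1 hm2))
      have hξA : ξ ∉ A := fun hξ => absurd (hγA ξ hξ) (not_le.2 (lt_of_lt_of_le hγs ha))
      have htξ : N < t.toFun ξ := by
        by_contra hle
        exact hξA ⟨hb, le_of_not_gt hle⟩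
      calc u.toFun m ≤ N := hum
        _ < t.toFun ξ := htξ
        _ = u.toFun ξ := htu.2 ξ hb
    have mem_of : ∀ (r : Option Lambda) (u : Lambda) (i : ℤˣ),
        precLt r t → Lambda.le t u → (t.dom < u.dom → u.toFun t.dom ≤ N) → d r ≤ γ →
        k = (-1) ^ ell t u * i → (s, j) ∈ Wset r u i := by
      intro r u i hprt htu hNb hdr hk
      have hell : ell s u = ell s t + ell t u := by
        rw [ell, ell, ell, main u htu hNb, List.length_append]
      refine ⟨⟨?_, Lambda.le_trans' hst htu⟩, ?_⟩
      · cases r with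
        | none => trivial
        | some r' =>
          have hr'γ : r'.dom ≤ γ := hdr
          have hr'lt : Lambda.lt r' t := hprt
          refine ⟨⟨(hr'γ.trans hγs.le).trans ?_, fun β hβ => ?_⟩, fun he => ?_⟩
          · exact le_refl s.dom
          · have hβs : β < s.dom := lt_of_lt_of_le hβ (hr'γ.trans hγs.le)
            rw [hr'lt.1.2 β hβ, ← hst.2 β hβs]
          · have : r'.dom < s.dom := lt_of_le_of_lt hr'γ hγs
            exact absurd (congrArg Lambda.dom he) (ne_of_lt this)
      · show j = (-1) ^ ell s u * i
        rw [hj, hk, hell, pow_add, mul_assoc]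
    have hNb1 : t.dom < u₁.dom → u₁.toFun t.dom ≤ N := fun h => by
      rw [hN_def]; exact le_max_of_le_left (le_of_eq (if_pos h).symm)
    have hNb2 : t.dom < u₂.dom → u₂.toFun t.dom ≤ N := fun h => by
      rw [hN_def]; exact le_max_of_le_right (le_of_eq (if_pos h).symm)
    exact ⟨mem_of r₁ u₁ i₁ hp1t htu1 hNb1 hγ1 hk1,
      mem_of r₂ u₂ i₂ hp2t htu2 hNb2 hγ2 hk2⟩

end Aux


/-- The sets `W(r,t,i)` form a basis for a topology on `D = Λ × {1,-1}`: explicitly, if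
`(t,k) ∈ W(r₁,u₁,i₁) ∩ W(r₂,u₂,i₂)` then there is `r ≺ t` with
`W(r,t,k) ⊆ W(r₁,u₁,i₁) ∩ W(r₂,u₂,i₂)`. -/
theorem Wsets_form_basis :
    TopologicalSpace.IsTopologicalBasis WBasis ∧
    ∀ (t : Lambda) (k : ℤˣ) (r₁ : Option Lambda) (u₁ : Lambda) (i₁ : ℤˣ)
      (r₂ : Option Lambda) (u₂ : Lambda) (i₂ : ℤˣ),
      precLt r₁ u₁ → precLt r₂ u₂ →
      (t, k) ∈ Wset r₁ u₁ i₁ ∩ Wset r₂ u₂ i₂ →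
      ∃ r : Option Lambda, precLt r t ∧ Wset r t k ⊆ Wset r₁ u₁ i₁ ∩ Wset r₂ u₂ i₂ := by
  refine ⟨⟨?_, ?_, rfl⟩, fun t k r₁ u₁ i₁ r₂ u₂ i₂ _ _ hmem =>
    key_lemma t k r₁ u₁ i₁ r₂ u₂ i₂ hmem⟩
  · intro S₁ hS₁ S₂ hS₂ x hx
    obtain ⟨ra, ua, ia, hpa, rfl⟩ := hS₁
    obtain ⟨rb, ub, ib, hpb, rfl⟩ := hS₂
    obtain ⟨r, hr, hsub⟩ := key_lemma x.1 x.2 ra ua ia rb ub ib (by simpa using hx)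
    exact ⟨Wset r x.1 x.2, ⟨r, x.1, x.2, hr, rfl⟩,
      ⟨⟨hr, Lambda.le_refl' _⟩, by rw [ell_self, pow_zero, one_mul]⟩, hsub⟩
  · ext x
    simp only [Set.mem_sUnion, Set.mem_univ, iff_true]
    exact ⟨Wset none x.1 x.2, ⟨none, x.1, x.2, trivial, rfl⟩,
      ⟨⟨trivial, Lambda.le_refl' _⟩, by rw [ell_self, pow_zero, one_mul]⟩⟩
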